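/- For any finite product C of B_n matrices, applying the substitution u ↦ u⁻¹ to the scalar (1,d) C (1,0)ᵀ yields (1,0) C (1,-d)ᵀ, where d = i(u⁻¹ - u). -/

import Mathlib

open Matrix

/-- The balanced q-integer `[n] = (u^n - u^{-n})/(u - u⁻¹)`, where `w` is the
inverse of `u - u⁻¹`. -/
def qint {R : Type*} [CommRing R] (u : Rˣ) (w : R) (n : ℤ) : R :=
  (((u ^ n : Rˣ) : R) - ((u ^ (-n) : Rˣ) : R)) * w

/-- The matrix `B_n = [[[n], i·u^{-n}], [i·u^n, 0]]`. -/
def Bmat {R : Type*} [CommRing R] (i : R) (u : Rˣ) (w : R) (n : ℤ) :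
    Matrix (Fin 2) (Fin 2) R :=
  !![qint u w n, i * ((u ^ (-n) : Rˣ) : R); i * ((u ^ n : Rˣ) : R), 0]

section Aux

variable {R : Type*} [CommRing R]

/-- The key inductive step: if `map τ P = Pᵀ + t • !![-d,1;-1,d]` and
`(1-d²)t = (P₀₁ - P₁₀) - d(P₀₀ - P₁₁)`, the same holds for `P * Bmat i u w n`. -/
theorem step_aux (i : R) (hi : i ^ 2 = -1)
    (u : Rˣ) (w : R) (hw : ((u : R) - ((u⁻¹ : Rˣ) : R)) * w = 1)
    (d : R) (hd : d = i * (((u⁻¹ : Rˣ) : R) - (u : R)))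
    (τ : R →+* R) (hτi : τ i = i) (hτu : τ (u : R) = ((u⁻¹ : Rˣ) : R))
    (huv : (u : R) * ((u⁻¹ : Rˣ) : R) = 1)
    (hτpow : ∀ m : ℤ, τ ((u ^ m : Rˣ) : R) = ((u ^ (-m) : Rˣ) : R))
    (hτw : τ w = -w)
    (n : ℤ) (P : Matrix (Fin 2) (Fin 2) R) (t : R)
    (h1 : P.map τ = Pᵀ + t • !![-d, 1; -1, d])
    (h2 : (1 - d ^ 2) * t = (P 0 1 - P 1 0) - d * (P 0 0 - P 1 1)) :
    ∃ t' : R, (P * Bmat i u w n).map τ = (P * Bmat i u w n)ᵀ + t' • !![-d, 1; -1, d] ∧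
      (1 - d ^ 2) * t' = ((P * Bmat i u w n) 0 1 - (P * Bmat i u w n) 1 0)
        - d * ((P * Bmat i u w n) 0 0 - (P * Bmat i u w n) 1 1) := by
  set uu : R := ((u : Rˣ) : R) with huu
  set vv : R := ((u⁻¹ : Rˣ) : R) with hvv
  set aa : R := ((u ^ n : Rˣ) : R) with haa
  set bb : R := ((u ^ (-n) : Rˣ) : R) with hbb
  set qq : R := qint u w n with hqq
  have hab : aa * bb = 1 := by
    rw [haa, hbb, ← Units.val_mul, ← _root_.zpow_add, add_neg_cancel, zpow_zero, Units.val_one]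
  have hq : qq = (aa - bb) * w := rfl
  -- τ of the entries of Bmat
  have hτa : τ aa = bb := by rw [haa, hbb, hτpow]
  have hτb : τ bb = aa := by rw [hbb, haa, hτpow, neg_neg]
  have hτq : τ qq = qq := by
    rw [hq, _root_.map_mul, _root_.map_sub, hτa, hτb, hτw]
    ring
  have hB : Bmat i u w n = !![qq, i * bb; i * aa, 0] := rfl
  have hτib : τ (i * bb) = i * aa := by rw [_root_.map_mul, hτi, hτb]
  have hτia : τ (i * aa) = i * bb := by rw [_root_.map_mul, hτi, hτa]
  have hmapB : (Bmat i u w n).map τ = !![qq, i * aa; i * bb, 0] := by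
    rw [hB]
    ext x y
    fin_cases x <;> fin_cases y <;>
      simp only [Matrix.map_apply, Matrix.of_apply, Matrix.cons_val', Matrix.cons_val_zero, Matrix.cons_val_one,
        Matrix.head_cons, Matrix.head_fin_const, Matrix.empty_val', Matrix.cons_val_fin_one,
        Fin.isValue, Fin.zero_eta, Fin.mk_one, hτq, hτib, hτia, map_zero]
  -- introduce names for the entries of P
  obtain ⟨p00, p01, p10, p11, rfl⟩ :
      ∃ a b c e, P = !![a, b; c, e] := ⟨_, _, _, _, Matrix.eta_fin_two P⟩
  simp only [Matrix.of_apply, Matrix.cons_val', Matrix.cons_val_zero, Matrix.cons_val_one,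
    Matrix.head_cons, Matrix.head_fin_const, Matrix.empty_val', Matrix.cons_val_fin_one,
    Fin.isValue] at h2
  refine ⟨i * aa * (p00 - d * t) - (p10 * qq + p11 * (i * aa)), ?_, ?_⟩
  · rw [Matrix.map_mul, h1, hmapB, hB]
    ext x y
    fin_cases x <;> fin_cases y <;>
      simp only [Matrix.mul_apply, Fin.sum_univ_two, Matrix.transpose_apply, Matrix.add_apply,
        Matrix.smul_apply, smul_eq_mul, Matrix.of_apply, Matrix.cons_val', Matrix.cons_val_zero,
        Matrix.cons_val_one, Matrix.head_cons, Matrix.head_fin_const, Matrix.empty_val',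
        Matrix.cons_val_fin_one, Fin.isValue, Fin.zero_eta, Fin.mk_one]
    · linear_combination ((-1)*i*bb*p10 + (-1)*i*bb*t + i*aa*p10 + i*aa*t) * hw +
        ((-1)*qq*p10 + (-1)*qq*t) * hd +
        ((-1)*i*vv*p10 + (-1)*i*vv*t + i*uu*p10 + i*uu*t) * hq + (i*aa) * h2
    · ring
    · linear_combination (vv*bb*t + (-1)*vv*aa*t + vv^2*w*bb*t + (-1)*vv^2*w*aa*t +
        (-1)*uu*bb*t + uu*aa*t + (-2)*uu*vv*w*bb*t + 2*uu*vv*w*aa*t + uu^2*w*bb*t +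
        (-1)*uu^2*w*aa*t) * hi +
        (vv*bb*t + (-1)*vv*aa*t + (-1)*uu*bb*t + uu*aa*t + (-1)*i*bb*p11 + i*bb*p00 +
        i*aa*p11 + (-1)*i*aa*p00) * hw +
        (w*bb*p11 + (-1)*w*bb*p00 + w*bb*d*t + (-1)*w*aa*p11 + w*aa*p00 + (-1)*w*aa*d*t +
        i*bb*t + (-1)*i*aa*t + i*vv*w*bb*t + (-1)*i*vv*w*aa*t + (-1)*i*uu*w*bb*t +
        i*uu*w*aa*t) * hd +
        ((-1)*p10 + p01 + (-1)*t) * hq + (w*bb + (-1)*w*aa) * h2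
    · linear_combination (i*bb*p10 + (-1)*i*aa*p10) * hw + (qq*p10) * hd +
        (i*vv*p10 + (-1)*i*uu*p10) * hq + ((-1)*i*aa) * h2
  · rw [hB]
    simp only [Matrix.mul_apply, Fin.sum_univ_two, Matrix.of_apply, Matrix.cons_val',
      Matrix.cons_val_zero, Matrix.cons_val_one, Matrix.head_cons, Matrix.head_fin_const,
      Matrix.empty_val', Matrix.cons_val_fin_one, Fin.isValue]
    linear_combination ((-1)*vv*bb*p10 + vv*aa*p10 + (-1)*vv^2*w*bb*p10 + vv^2*w*aa*p10 +
      uu*bb*p10 + (-1)*uu*aa*p10 + 2*uu*vv*w*bb*p10 + (-2)*uu*vv*w*aa*p10 +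
      (-1)*uu^2*w*bb*p10 + uu^2*w*aa*p10) * hi +
      ((-1)*vv*bb*p10 + vv*aa*p10 + uu*bb*p10 + (-1)*uu*aa*p10 + i*bb*p00 +
      (-1)*i*aa*p00) * hw +
      (qq*p00 + d*qq*p10 + (-1)*i*bb*p10 + i*aa*p01 + (-1)*i*aa*t + i*aa*d*p11 +
      (-1)*i*aa*d*p00 + i*aa*d^2*t + i*vv*qq*p10 + (-1)*i*uu*qq*p10) * hd +
      (i*vv*p00 + (-1)*i*uu*p00 + i^2*vv^2*p10 + (-2)*i^2*uu*vv*p10 + i^2*uu^2*p10) * hq +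
      ((-1)*i^2*vv*aa + i^2*uu*aa) * h2

end Aux

theorem stmt13 {R : Type*} [CommRing R] (i : R) (hi : i ^ 2 = -1)
    (u : Rˣ) (w : R) (hw : ((u : R) - ((u⁻¹ : Rˣ) : R)) * w = 1)
    (d : R) (hd : d = i * (((u⁻¹ : Rˣ) : R) - (u : R)))
    (τ : R →+* R) (hτi : τ i = i) (hτu : τ (u : R) = ((u⁻¹ : Rˣ) : R))
    (l : List ℤ) :
    τ (dotProduct ![1, d] (((l.map (Bmat i u w)).prod).mulVec ![1, 0]))
      = dotProduct ![1, 0]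
          (((l.map (Bmat i u w)).prod).mulVec ![1, -d]) := by
  have huv : (u : R) * ((u⁻¹ : Rˣ) : R) = 1 := by
    rw [← Units.val_mul, mul_inv_cancel, Units.val_one]
  have hτv : τ ((u⁻¹ : Rˣ) : R) = (u : R) := by
    have h1 : ((u⁻¹ : Rˣ) : R) * τ ((u⁻¹ : Rˣ) : R) = 1 := by
      have := congrArg τ huv
      rwa [_root_.map_mul, _root_.map_one, hτu] at this
    calc τ ((u⁻¹ : Rˣ) : R) = ((u : R) * ((u⁻¹ : Rˣ) : R)) * τ ((u⁻¹ : Rˣ) : R) := by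
          rw [huv, one_mul]
      _ = (u : R) * (((u⁻¹ : Rˣ) : R) * τ ((u⁻¹ : Rˣ) : R)) := by ring
      _ = (u : R) := by rw [h1, mul_one]
  have hτw : τ w = -w := by
    have h2 : (((u⁻¹ : Rˣ) : R) - (u : R)) * τ w = 1 := by
      have := congrArg τ hw
      rwa [_root_.map_mul, _root_.map_sub, hτu, hτv, _root_.map_one] at this
    calc τ w = (((u : R) - ((u⁻¹ : Rˣ) : R)) * w) * τ w := by rw [hw, one_mul]
      _ = -(((((u⁻¹ : Rˣ) : R) - (u : R)) * τ w) * w) := by ring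
      _ = -w := by rw [h2, one_mul]
  have hτpow : ∀ m : ℤ, τ ((u ^ m : Rˣ) : R) = ((u ^ (-m) : Rˣ) : R) := by
    intro m
    have h3 : Units.map (τ : R →* R) u = u⁻¹ := by
      ext
      simpa using hτu
    have h5 : Units.map (τ : R →* R) (u ^ m) = u ^ (-m) := by
      rw [map_zpow, h3, _root_.inv_zpow, ← _root_.zpow_neg]
    have h4 : τ ((u ^ m : Rˣ) : R) = ((Units.map (τ : R →* R) (u ^ m) : Rˣ) : R) := rfl
    rw [h4, h5]
  have hτd : τ d = -d := by
    rw [hd, _root_.map_mul, _root_.map_sub, hτi, hτu, hτv]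
    ring
  have key : ∀ l' : List ℤ, ∃ t : R,
      ((l'.map (Bmat i u w)).prod).map τ
        = ((l'.map (Bmat i u w)).prod)ᵀ + t • !![-d, 1; -1, d] ∧
      (1 - d ^ 2) * t = (((l'.map (Bmat i u w)).prod) 0 1 - ((l'.map (Bmat i u w)).prod) 1 0)
        - d * (((l'.map (Bmat i u w)).prod) 0 0 - ((l'.map (Bmat i u w)).prod) 1 1) := by
    intro l'
    induction l' using List.reverseRecOn with
    | nil =>
      refine ⟨0, ?_, ?_⟩
      · ext x y
        fin_cases x <;> fin_cases y <;>
          simp [Matrix.one_apply, _root_.map_one, _root_.map_zero]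
      · simp [Matrix.one_apply]
    | append_singleton l'' n ih =>
      obtain ⟨t, h1, h2⟩ := ih
      rw [List.map_append, List.prod_append, List.map_singleton, List.prod_singleton]
      exact step_aux i hi u w hw d hd τ hτi hτu huv hτpow hτw n _ t h1 h2
  obtain ⟨t, h1, h2⟩ := key l
  set P : Matrix (Fin 2) (Fin 2) R := (l.map (Bmat i u w)).prod with hP
  have e00 : τ (P 0 0) = P 0 0 + t * (-d) := by
    have := congrFun (congrFun h1 0) 0
    simpa [Matrix.map_apply, Matrix.add_apply, Matrix.transpose_apply, Matrix.smul_apply,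
      smul_eq_mul] using this
  have e10 : τ (P 1 0) = P 0 1 + t * (-1) := by
    have := congrFun (congrFun h1 1) 0
    simpa [Matrix.map_apply, Matrix.add_apply, Matrix.transpose_apply, Matrix.smul_apply,
      smul_eq_mul] using this
  simp only [dotProduct, Matrix.mulVec, Fin.sum_univ_two, Matrix.cons_val_zero,
    Matrix.cons_val_one, Matrix.head_cons, mul_one, mul_zero, add_zero, one_mul, zero_mul]
  rw [_root_.map_add, _root_.map_mul, e00, hτd, e10]
  ring
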